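/- Support propagation under the Non-Vanishing-Support property: if γ satisfies the N.V.S. property for dictionary D (i.e., ‖Dγ‖₀ equals the number of non-zero rows of D_T where T = supp(γ)), and γ̂ is any vector with supp(γ̂) ⊆ supp(γ), then supp(Dγ̂) ⊆ supp(Dγ), and consequently ‖Dγ̂‖₀ ≤ ‖Dγ‖₀. -/

import Mathlib

/-- Support propagation under the Non-Vanishing-Support (N.V.S.) property: if
`‖Dγ‖₀` equals the number of non-zero rows of `D_T` (`T = supp(γ)`), then for any `γ̂` with
`supp(γ̂) ⊆ supp(γ)` one has `supp(Dγ̂) ⊆ supp(Dγ)`, and consequently `‖Dγ̂‖₀ ≤ ‖Dγ‖₀`. -/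
theorem stmt_8 {N M : ℕ} (D : Matrix (Fin N) (Fin M) ℝ) (γ γh : Fin M → ℝ)
    (hNVS : (Finset.univ.filter fun r => D.mulVec γ r ≠ 0).card =
      (@Finset.filter _ (fun r : Fin N => ∃ c, γ c ≠ 0 ∧ D r c ≠ 0)
        (fun _ => Fintype.decidableExistsFintype) Finset.univ).card)
    (hsupp : ∀ c, γh c ≠ 0 → γ c ≠ 0) :
    (∀ r, D.mulVec γh r ≠ 0 → D.mulVec γ r ≠ 0) ∧
      (Finset.univ.filter fun r => D.mulVec γh r ≠ 0).card ≤
        (Finset.univ.filter fun r => D.mulVec γ r ≠ 0).card := by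
  have hsub : (Finset.univ.filter fun r => D.mulVec γ r ≠ 0) ⊆
      (@Finset.filter _ (fun r : Fin N => ∃ c, γ c ≠ 0 ∧ D r c ≠ 0)
        (fun _ => Fintype.decidableExistsFintype) Finset.univ) := by
    intro r hr
    simp only [Finset.mem_filter, Finset.mem_univ, true_and] at hr ⊢
    by_contra h
    push_neg at h
    apply hr
    unfold Matrix.mulVec dotProduct
    apply Finset.sum_eq_zero
    intro c _
    by_cases hc : γ c = 0
    · simp [hc]
    · simp [h c hc]
  have heq : (Finset.univ.filter fun r => D.mulVec γ r ≠ 0) =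
      (@Finset.filter _ (fun r : Fin N => ∃ c, γ c ≠ 0 ∧ D r c ≠ 0)
        (fun _ => Fintype.decidableExistsFintype) Finset.univ) :=
    Finset.eq_of_subset_of_card_le hsub hNVS.ge
  have hmain : ∀ r, D.mulVec γh r ≠ 0 → D.mulVec γ r ≠ 0 := by
    intro r hr
    have : ∃ c, γ c ≠ 0 ∧ D r c ≠ 0 := by
      by_contra h
      push_neg at h
      apply hr
      unfold Matrix.mulVec dotProduct
      apply Finset.sum_eq_zero
      intro c _
      by_cases hc : γh c = 0
      · simp [hc]
      · simp [h c (hsupp c hc)]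
    have hmem : r ∈ (@Finset.filter _ (fun r : Fin N => ∃ c, γ c ≠ 0 ∧ D r c ≠ 0)
        (fun _ => Fintype.decidableExistsFintype) Finset.univ) :=
      by simp only [Finset.mem_filter, Finset.mem_univ, true_and]; exact this
    rw [← heq] at hmem
    exact (Finset.mem_filter.mp hmem).2
  exact ⟨hmain, Finset.card_le_card fun r hr => by
    simp only [Finset.mem_filter, Finset.mem_univ, true_and] at hr ⊢
    exact hmain r hr⟩
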